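/- Let n ≥ 1, let τ : ℝⁿ → ℝⁿ be a C² vector field and α : ℝⁿ → ℝ a C¹ function such that ∂ᵢτⱼ(x) + ∂ⱼτᵢ(x) = (1 + α(x))·δᵢⱼ for all x ∈ ℝⁿ and all i,j. Then for every C³ function f : ℝⁿ → ℝ and every x ∈ ℝⁿ: Δ(τ·∇f) − τ·∇(Δf) = (1 + α)·Δf − ((n−2)/2)·⟨∇α, ∇f⟩, where Δh := Σᵢ ∂ᵢ²h is the Euclidean Laplacian, τ·∇h := Σⱼ τⱼ ∂ⱼh, and ⟨∇α, ∇f⟩ := Σᵢ (∂ᵢα)(∂ᵢf). -/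

import Mathlib

/- Lemma 3.2 of the paper in the flat (Euclidean) case: for a conformal Killing
vector field τ on ℝⁿ with conformal factor α,
  Δ(τ·∇f) − τ·∇(Δf) = (1 + α)·Δf − ((n−2)/2)·⟨∇α, ∇f⟩. -/

/-- Partial derivative in the `i`-th coordinate direction on `Fin n → ℝ`. -/
noncomputable def pd {n : ℕ} (i : Fin n) (h : (Fin n → ℝ) → ℝ) :
    (Fin n → ℝ) → ℝ :=
  fun x => fderiv ℝ h x (Pi.single i 1)

/-- Euclidean Laplacian on `Fin n → ℝ`. -/
noncomputable def lap {n : ℕ} (h : (Fin n → ℝ) → ℝ) : (Fin n → ℝ) → ℝ :=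
  fun x => ∑ i, pd i (pd i h) x

section Helpers

variable {n : ℕ}

lemma pd_contDiff {k : ℕ} {h : (Fin n → ℝ) → ℝ} (hh : ContDiff ℝ (k + 1) h) (i : Fin n) :
    ContDiff ℝ k (pd i h) := by
  have h1 : ContDiff ℝ k (fderiv ℝ h) := hh.fderiv_right (by exact_mod_cast le_refl _)
  exact h1.clm_apply contDiff_const

lemma pd_sum {ι : Type*} (s : Finset ι) (g : ι → (Fin n → ℝ) → ℝ) (i : Fin n) (x : Fin n → ℝ)
    (hg : ∀ j ∈ s, DifferentiableAt ℝ (g j) x) :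
    pd i (fun y => ∑ j ∈ s, g j y) x = ∑ j ∈ s, pd i (g j) x := by
  unfold pd
  rw [fderiv_fun_sum hg]
  simp

lemma pd_add {u v : (Fin n → ℝ) → ℝ} (i : Fin n) (x : Fin n → ℝ)
    (hu : DifferentiableAt ℝ u x) (hv : DifferentiableAt ℝ v x) :
    pd i (fun y => u y + v y) x = pd i u x + pd i v x := by
  unfold pd; rw [fderiv_fun_add hu hv]; simp

lemma pd_sub {u v : (Fin n → ℝ) → ℝ} (i : Fin n) (x : Fin n → ℝ)
    (hu : DifferentiableAt ℝ u x) (hv : DifferentiableAt ℝ v x) :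
    pd i (fun y => u y - v y) x = pd i u x - pd i v x := by
  unfold pd; rw [fderiv_fun_sub hu hv]; simp

lemma pd_mul {u v : (Fin n → ℝ) → ℝ} (i : Fin n) (x : Fin n → ℝ)
    (hu : DifferentiableAt ℝ u x) (hv : DifferentiableAt ℝ v x) :
    pd i (fun y => u y * v y) x = pd i u x * v x + u x * pd i v x := by
  unfold pd; rw [fderiv_fun_mul hu hv]; simp; ring

lemma pd_mul_const {u : (Fin n → ℝ) → ℝ} (c : ℝ) (i : Fin n) (x : Fin n → ℝ)
    (hu : DifferentiableAt ℝ u x) :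
    pd i (fun y => u y * c) x = pd i u x * c := by
  unfold pd; rw [fderiv_mul_const hu]; simp [mul_comm]

lemma pd_const_add {u : (Fin n → ℝ) → ℝ} (c : ℝ) (i : Fin n) (x : Fin n → ℝ) :
    pd i (fun y => c + u y) x = pd i u x := by
  unfold pd; rw [fderiv_const_add]

lemma pd_comm {h : (Fin n → ℝ) → ℝ} (hh : ContDiff ℝ 2 h) (i j : Fin n) (x : Fin n → ℝ) :
    pd i (pd j h) x = pd j (pd i h) x := by
  have hsym : IsSymmSndFDerivAt ℝ h x := hh.contDiffAt.isSymmSndFDerivAt (by simp [minSmoothness_of_isRCLikeNormedField])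
  have hd : DifferentiableAt ℝ (fderiv ℝ h) x :=
    (hh.fderiv_right (m := 1) (by norm_num)).differentiable one_ne_zero x
  have key : ∀ a b : Fin n,
      pd a (pd b h) x = fderiv ℝ (fderiv ℝ h) x (Pi.single a 1) (Pi.single b 1) := by
    intro a b
    unfold pd
    rw [fderiv_clm_apply hd (differentiableAt_const _)]
    simp
  rw [key, key, hsym.eq]

end Helpers

theorem laplacian_conformal_killing_commutator (n : ℕ) (hn : 1 ≤ n)
    (τ : (Fin n → ℝ) → Fin n → ℝ) (α : (Fin n → ℝ) → ℝ)
    (hτ : ContDiff ℝ 2 τ) (hα : ContDiff ℝ 1 α)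
    (hCK : ∀ (x : Fin n → ℝ) (i j : Fin n),
      pd i (fun y => τ y j) x + pd j (fun y => τ y i) x
        = (1 + α x) * (if i = j then 1 else 0))
    (f : (Fin n → ℝ) → ℝ) (hf : ContDiff ℝ 3 f) (x : Fin n → ℝ) :
    lap (fun y => ∑ j, τ y j * pd j f y) x - ∑ j, τ x j * pd j (lap f) x
      = (1 + α x) * lap f x - (((n : ℝ) - 2) / 2) * ∑ i, pd i α x * pd i f x := by
  classical
  have hτj : ∀ j, ContDiff ℝ 2 (fun y => τ y j) := fun j => contDiff_pi.mp hτ j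
  have hτj1 : ∀ i j, ContDiff ℝ 1 (pd i (fun y => τ y j)) := fun i j =>
    pd_contDiff (k := 1) (hτj j) i
  have hf2 : ContDiff ℝ 2 f := hf.of_le (by norm_num)
  have hpf2 : ∀ j, ContDiff ℝ 2 (pd j f) := fun j => pd_contDiff (k := 2) hf j
  have hpf1 : ∀ i j, ContDiff ℝ 1 (pd i (pd j f)) := fun i j => pd_contDiff (k := 1) (hpf2 j) i
  have dτ : ∀ (j) (y : Fin n → ℝ), DifferentiableAt ℝ (fun z => τ z j) y := fun j y =>
    ((hτj j).differentiable (by norm_num)) y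
  have dpτ : ∀ (i j) (y : Fin n → ℝ), DifferentiableAt ℝ (pd i (fun z => τ z j)) y := fun i j y =>
    ((hτj1 i j).differentiable one_ne_zero) y
  have dpf : ∀ (j) (y : Fin n → ℝ), DifferentiableAt ℝ (pd j f) y := fun j y =>
    ((hpf2 j).differentiable (by norm_num)) y
  have dppf : ∀ (i j) (y : Fin n → ℝ), DifferentiableAt ℝ (pd i (pd j f)) y := fun i j y =>
    ((hpf1 i j).differentiable one_ne_zero) y
  have dα : ∀ y : Fin n → ℝ, DifferentiableAt ℝ α y := fun y => (hα.differentiable one_ne_zero) y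
  -- first derivative of g
  have hpig : ∀ i, pd i (fun y => ∑ j, τ y j * pd j f y)
      = fun y => ∑ j, (pd i (fun z => τ z j) y * pd j f y + τ y j * pd i (pd j f) y) := by
    intro i; funext y
    rw [pd_sum Finset.univ (fun j => fun z => τ z j * pd j f z) i y
      (fun j _ => (dτ j y).mul (dpf j y))]
    exact Finset.sum_congr rfl fun j _ => pd_mul i y (dτ j y) (dpf j y)
  -- second derivative of g
  have hlapg : lap (fun y => ∑ j, τ y j * pd j f y) x
      = ∑ i, ∑ j, (pd i (pd i (fun z => τ z j)) x * pd j f x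
          + 2 * (pd i (fun z => τ z j) x * pd i (pd j f) x)
          + τ x j * pd i (pd i (pd j f)) x) := by
    unfold lap
    refine Finset.sum_congr rfl fun i _ => ?_
    rw [hpig i]
    rw [pd_sum Finset.univ
      (fun j => fun y => pd i (fun z => τ z j) y * pd j f y + τ y j * pd i (pd j f) y) i x
      (fun j _ => ((dpτ i j x).mul (dpf j x)).add ((dτ j x).mul (dppf i j x)))]
    refine Finset.sum_congr rfl fun j _ => ?_
    rw [pd_add i x ((dpτ i j x).fun_mul (dpf j x)) ((dτ j x).fun_mul (dppf i j x)),
      pd_mul i x (dpτ i j x) (dpf j x), pd_mul i x (dτ j x) (dppf i j x)]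
    ring
  -- third derivatives commute
  have h3 : ∀ j, pd j (lap f) x = ∑ i, pd i (pd i (pd j f)) x := by
    intro j
    have hl : lap f = fun y => ∑ i, pd i (pd i f) y := rfl
    rw [hl, pd_sum Finset.univ (fun i => pd i (pd i f)) j x
      (fun i _ => ((pd_contDiff (k := 1) (hpf2 i) i).differentiable one_ne_zero) x)]
    refine Finset.sum_congr rfl fun i _ => ?_
    rw [pd_comm (hpf2 i) j i x]
    have h4 : pd j (pd i f) = pd i (pd j f) := funext fun y => pd_comm hf2 j i y
    rw [h4]
  -- second term equals the triple-derivative sum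
  have hR : ∑ j, τ x j * pd j (lap f) x = ∑ i, ∑ j, τ x j * pd i (pd i (pd j f)) x := by
    rw [Finset.sum_comm]
    exact Finset.sum_congr rfl fun j _ => by rw [h3 j, Finset.mul_sum]
  -- the B-term
  have hs : ∀ i j, pd i (pd j f) x = pd j (pd i f) x := fun i j => pd_comm hf2 i j x
  have hT : (∑ i, ∑ j, pd i (fun z => τ z j) x * pd i (pd j f) x)
      = ∑ i, ∑ j, pd j (fun z => τ z i) x * pd i (pd j f) x := by
    rw [Finset.sum_comm]
    exact Finset.sum_congr rfl fun i _ => Finset.sum_congr rfl fun j _ => by rw [hs]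
  have hB : ∑ i, ∑ j, 2 * (pd i (fun z => τ z j) x * pd i (pd j f) x)
      = (1 + α x) * lap f x := by
    have step : ∑ i, ∑ j, 2 * (pd i (fun z => τ z j) x * pd i (pd j f) x)
        = ∑ i, ∑ j, ((pd i (fun z => τ z j) x + pd j (fun z => τ z i) x) * pd i (pd j f) x) := by
      calc ∑ i, ∑ j, 2 * (pd i (fun z => τ z j) x * pd i (pd j f) x)
          = ∑ i, ∑ j, (pd i (fun z => τ z j) x * pd i (pd j f) x
              + pd i (fun z => τ z j) x * pd i (pd j f) x) :=
            Finset.sum_congr rfl fun i _ => Finset.sum_congr rfl fun j _ => by ring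
        _ = (∑ i, ∑ j, pd i (fun z => τ z j) x * pd i (pd j f) x)
            + ∑ i, ∑ j, pd i (fun z => τ z j) x * pd i (pd j f) x := by
            rw [← Finset.sum_add_distrib]
            exact Finset.sum_congr rfl fun i _ => Finset.sum_add_distrib
        _ = (∑ i, ∑ j, pd i (fun z => τ z j) x * pd i (pd j f) x)
            + ∑ i, ∑ j, pd j (fun z => τ z i) x * pd i (pd j f) x := by rw [← hT]
        _ = ∑ i, ∑ j, ((pd i (fun z => τ z j) x + pd j (fun z => τ z i) x) * pd i (pd j f) x) := by
            rw [← Finset.sum_add_distrib]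
            refine Finset.sum_congr rfl fun i _ => ?_
            rw [← Finset.sum_add_distrib]
            exact Finset.sum_congr rfl fun j _ => by ring
    rw [step]
    have step2 : ∀ i j, (pd i (fun z => τ z j) x + pd j (fun z => τ z i) x) * pd i (pd j f) x
        = (1 + α x) * (if i = j then pd i (pd j f) x else 0) := by
      intro i j; rw [hCK x i j]; by_cases h : i = j <;> simp [h]
    simp_rw [step2]
    unfold lap
    rw [Finset.mul_sum]
    refine Finset.sum_congr rfl fun i _ => ?_
    rw [← Finset.mul_sum]
    congr 1
    simp
  -- the A-term
  have hAj : ∀ j, (∑ i, pd i (pd i (fun z => τ z j)) x) = (1 - (n : ℝ) / 2) * pd j α x := by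
    intro j
    have hdiag : ∀ i : Fin n, pd i (fun z => τ z i) = fun y => (1 + α y) * (1 / 2) := by
      intro i; funext y
      have := hCK y i i
      simp at this
      linarith
    have hterm : ∀ i, pd i (pd i (fun z => τ z j)) x
        = pd i α x * (if i = j then 1 else 0) - pd j α x * (1 / 2) := by
      intro i
      have hfe : pd i (fun z => τ z j)
          = fun y => (1 + α y) * (if i = j then (1:ℝ) else 0) - pd j (fun z => τ z i) y := by
        funext y
        have := hCK y i j
        linarith
      rw [hfe]
      rw [pd_sub i x (((differentiableAt_const _).fun_add (dα x)).fun_mul (differentiableAt_const _)) (dpτ j i x)]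
      rw [pd_mul_const _ i x ((differentiableAt_const _).fun_add (dα x)),
        pd_const_add 1 i x]
      rw [pd_comm (hτj i) i j x]
      rw [hdiag i]
      rw [pd_mul_const _ j x ((differentiableAt_const _).fun_add (dα x)), pd_const_add 1 j x]
    simp_rw [hterm]
    rw [Finset.sum_sub_distrib]
    simp [mul_ite, Finset.sum_ite_eq', Finset.card_univ]
    ring
  have hA : ∑ i, ∑ j, pd i (pd i (fun z => τ z j)) x * pd j f x
      = (1 - (n : ℝ) / 2) * ∑ j, pd j α x * pd j f x := by
    rw [Finset.sum_comm, Finset.mul_sum]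
    refine Finset.sum_congr rfl fun j _ => ?_
    rw [← Finset.sum_mul, hAj j]
    ring
  -- assemble
  rw [hlapg, hR]
  have split : ∑ i, ∑ j, (pd i (pd i (fun z => τ z j)) x * pd j f x
          + 2 * (pd i (fun z => τ z j) x * pd i (pd j f) x)
          + τ x j * pd i (pd i (pd j f)) x)
      = (∑ i, ∑ j, pd i (pd i (fun z => τ z j)) x * pd j f x)
        + (∑ i, ∑ j, 2 * (pd i (fun z => τ z j) x * pd i (pd j f) x))
        + ∑ i, ∑ j, τ x j * pd i (pd i (pd j f)) x := by
    rw [← Finset.sum_add_distrib, ← Finset.sum_add_distrib]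
    refine Finset.sum_congr rfl fun i _ => ?_
    rw [← Finset.sum_add_distrib, ← Finset.sum_add_distrib]
  rw [split, hA, hB]
  ring
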